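/- Let k ≥ 1 be an integer and c ∈ ℝ, and for n ≥ 3 let t_c(k,n) := (((k/2+1)·log n + (k/2)·log log n + c)/n)^{1/(k+1)}. For each n and t ∈ [0,1], let B_{n,t} be a binomial random variable with parameters n−k and t^k. Then Σ_{n} ∫_{t_c(k,n)}^{1} n^k · t^{k(k−1)/2} · P( |B_{n,t} − (n−k)t^k| ≥ ((n−k)t^k)^{3/5} ) dt < ∞, where the sum is over all integers n large enough that t_c(k,n) ∈ (0,1). -/

import Mathlib

/-- The critical window time `t_c(k,n)`. -/
noncomputable def tc (k : ℕ) (c : ℝ) (n : ℕ) : ℝ :=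
  ((((k : ℝ) / 2 + 1) * Real.log n + ((k : ℝ) / 2) * Real.log (Real.log n) + c) / n)
    ^ ((1 : ℝ) / (k + 1))

/-- `P(|B_{n,t} − (n−k)t^k| ≥ ((n−k)t^k)^{3/5})` for a binomial random variable `B_{n,t}`
with parameters `n−k` and `t^k`, written out as an explicit sum. -/
noncomputable def binomTail (k n : ℕ) (t : ℝ) : ℝ :=
  ∑ j ∈ Finset.range (n - k + 1),
    if (((n - k : ℕ) : ℝ) * t ^ k) ^ ((3 : ℝ) / 5) ≤
        |(j : ℝ) - ((n - k : ℕ) : ℝ) * t ^ k| then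
      ((n - k).choose j : ℝ) * (t ^ k) ^ j * (1 - t ^ k) ^ (n - k - j)
    else 0

open Real Finset Filter

lemma exp_le_quad {x : ℝ} (hx : |x| ≤ 1) : Real.exp x ≤ 1 + x + x ^ 2 := by
  have h := Real.exp_bound hx (n := 2) (by norm_num)
  have hs : ∑ m ∈ Finset.range 2, x ^ m / m.factorial = 1 + x := by
    simp [Finset.sum_range_succ]
  rw [hs] at h
  have h1 := (abs_sub_le_iff.1 h).1
  have h2 : |x| ^ 2 = x ^ 2 := sq_abs x
  have h3 : ((Nat.succ 2 : ℕ) : ℝ) / ((Nat.factorial 2 : ℕ) * ((2:ℕ):ℝ)) = 3 / 4 := by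
    norm_num [Nat.factorial]
  rw [h2, h3] at h1
  nlinarith [sq_nonneg x]

lemma mgf_sum (m : ℕ) (p x : ℝ) :
    ∑ j ∈ range (m + 1), (m.choose j : ℝ) * p ^ j * (1 - p) ^ (m - j) * Real.exp (x * j)
      = (p * Real.exp x + (1 - p)) ^ m := by
  rw [add_pow]
  refine Finset.sum_congr rfl fun j hj => ?_
  rw [mul_pow, ← Real.exp_nat_mul, mul_comm (j : ℝ) x]
  ring

lemma base_le (m : ℕ) (p x : ℝ) (hp0 : 0 ≤ p) (hp1 : p ≤ 1) :
    (p * Real.exp x + (1 - p)) ^ m ≤ Real.exp ((m : ℝ) * (p * (Real.exp x - 1))) := by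
  have hb : 0 ≤ p * Real.exp x + (1 - p) :=
    add_nonneg (mul_nonneg hp0 (Real.exp_nonneg _)) (by linarith)
  have h : p * Real.exp x + (1 - p) ≤ Real.exp (p * (Real.exp x - 1)) := by
    have h2 : p * Real.exp x + (1 - p) = p * (Real.exp x - 1) + 1 := by ring
    rw [h2]
    exact Real.add_one_le_exp _
  calc (p * Real.exp x + (1 - p)) ^ m ≤ Real.exp (p * (Real.exp x - 1)) ^ m :=
        pow_le_pow_left₀ hb h m
    _ = Real.exp ((m : ℝ) * (p * (Real.exp x - 1))) := (Real.exp_nat_mul _ m).symm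


lemma chernoff_abstract (m : ℕ) (p μ a l B : ℝ) (hp0 : 0 ≤ p) (hp1 : p ≤ 1)
    (hμdef : μ = (m : ℝ) * p) (hμ0 : 0 < μ) (hl0 : 0 ≤ l) (hl1 : l ≤ 1)
    (hB : μ * l ^ 2 - l * a ≤ B) :
    (∑ j ∈ range (m + 1),
      if a ≤ |(j : ℝ) - μ| then
        (m.choose j : ℝ) * p ^ j * (1 - p) ^ (m - j) else 0)
      ≤ 2 * Real.exp B := by
  have hw : ∀ j : ℕ, 0 ≤ (m.choose j : ℝ) * p ^ j * (1 - p) ^ (m - j) := by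
    intro j
    have h1p : (0:ℝ) ≤ 1 - p := by linarith
    positivity
  have key : ∀ j ∈ range (m + 1),
      (if a ≤ |(j : ℝ) - μ| then (m.choose j : ℝ) * p ^ j * (1 - p) ^ (m - j) else 0)
        ≤ (m.choose j : ℝ) * p ^ j * (1 - p) ^ (m - j) * Real.exp (l * ((j : ℝ) - μ - a))
          + (m.choose j : ℝ) * p ^ j * (1 - p) ^ (m - j) * Real.exp (l * (μ - a - (j : ℝ))) := by
    intro j _
    have hwj := hw j
    split_ifs with h
    · rcases le_abs.1 h with h' | h'
      · have h1 : (1:ℝ) ≤ Real.exp (l * ((j:ℝ) - μ - a)) :=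
          Real.one_le_exp (mul_nonneg hl0 (by linarith))
        nlinarith [Real.exp_nonneg (l * (μ - a - (j:ℝ)))]
      · have h1 : (1:ℝ) ≤ Real.exp (l * (μ - a - (j:ℝ))) :=
          Real.one_le_exp (mul_nonneg hl0 (by linarith))
        nlinarith [Real.exp_nonneg (l * ((j:ℝ) - μ - a))]
    · positivity
  have step1 := Finset.sum_le_sum key
  have step2 : ∑ j ∈ range (m + 1),
      ((m.choose j : ℝ) * p ^ j * (1 - p) ^ (m - j) * Real.exp (l * ((j : ℝ) - μ - a))
        + (m.choose j : ℝ) * p ^ j * (1 - p) ^ (m - j) * Real.exp (l * (μ - a - (j : ℝ))))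
      = (p * Real.exp l + (1 - p)) ^ m * Real.exp (l * (-μ - a))
        + (p * Real.exp (-l) + (1 - p)) ^ m * Real.exp (l * (μ - a)) := by
    rw [← mgf_sum m p l, ← mgf_sum m p (-l), Finset.sum_mul, Finset.sum_mul,
      ← Finset.sum_add_distrib]
    refine Finset.sum_congr rfl fun j _ => ?_
    have e1 : l * ((j:ℝ) - μ - a) = l * (j:ℝ) + l * (-μ - a) := by ring
    have e2 : l * (μ - a - (j:ℝ)) = -l * (j:ℝ) + l * (μ - a) := by ring
    rw [e1, e2, Real.exp_add, Real.exp_add]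
    ring
  have hq1 : Real.exp l ≤ 1 + l + l ^ 2 := exp_le_quad (by rwa [abs_of_nonneg hl0])
  have hq2 : Real.exp (-l) ≤ 1 - l + l ^ 2 := by
    have h := exp_le_quad (x := -l) (by rwa [abs_neg, abs_of_nonneg hl0])
    nlinarith
  have hb1 : (p * Real.exp l + (1 - p)) ^ m * Real.exp (l * (-μ - a))
      ≤ Real.exp B := by
    calc (p * Real.exp l + (1 - p)) ^ m * Real.exp (l * (-μ - a))
        ≤ Real.exp ((m:ℝ) * (p * (Real.exp l - 1))) * Real.exp (l * (-μ - a)) :=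
          mul_le_mul_of_nonneg_right (base_le m p l hp0 hp1) (Real.exp_nonneg _)
      _ = Real.exp ((m:ℝ) * (p * (Real.exp l - 1)) + l * (-μ - a)) := (Real.exp_add _ _).symm
      _ ≤ Real.exp B := by
          apply Real.exp_le_exp.2
          have h1 : (m:ℝ) * (p * (Real.exp l - 1)) = μ * (Real.exp l - 1) := by
            rw [hμdef]; ring
          have h2 : μ * (Real.exp l - 1 - l) ≤ μ * l ^ 2 :=
            mul_le_mul_of_nonneg_left (by nlinarith) hμ0.le
          rw [h1]; nlinarith
  have hb2 : (p * Real.exp (-l) + (1 - p)) ^ m * Real.exp (l * (μ - a))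
      ≤ Real.exp B := by
    calc (p * Real.exp (-l) + (1 - p)) ^ m * Real.exp (l * (μ - a))
        ≤ Real.exp ((m:ℝ) * (p * (Real.exp (-l) - 1))) * Real.exp (l * (μ - a)) :=
          mul_le_mul_of_nonneg_right (base_le m p (-l) hp0 hp1) (Real.exp_nonneg _)
      _ = Real.exp ((m:ℝ) * (p * (Real.exp (-l) - 1)) + l * (μ - a)) := (Real.exp_add _ _).symm
      _ ≤ Real.exp B := by
          apply Real.exp_le_exp.2
          have h1 : (m:ℝ) * (p * (Real.exp (-l) - 1)) = μ * (Real.exp (-l) - 1) := by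
            rw [hμdef]; ring
          have h2 : μ * (Real.exp (-l) - 1 + l) ≤ μ * l ^ 2 :=
            mul_le_mul_of_nonneg_left (by nlinarith) hμ0.le
          rw [h1]; nlinarith
  rw [step2] at step1
  linarith

lemma binom_tail_le (m : ℕ) (p : ℝ) (hp0 : 0 ≤ p) (hp1 : p ≤ 1) (hm : 1 ≤ (m : ℝ) * p) :
    (∑ j ∈ range (m + 1),
      if ((m : ℝ) * p) ^ ((3 : ℝ) / 5) ≤ |(j : ℝ) - (m : ℝ) * p| then
        (m.choose j : ℝ) * p ^ j * (1 - p) ^ (m - j) else 0)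
      ≤ 2 * Real.exp (-((m : ℝ) * p) ^ ((1 : ℝ) / 5) / 4) := by
  have hμ0 : (0:ℝ) < (m : ℝ) * p := lt_of_lt_of_le one_pos hm
  set μ := (m : ℝ) * p with hμdef
  refine chernoff_abstract m p μ (μ ^ ((3:ℝ)/5)) (μ ^ (-(2:ℝ)/5) / 2) _ hp0 hp1 hμdef hμ0
    (by positivity) ?_ ?_
  · have h := Real.rpow_le_one_of_one_le_of_nonpos hm (by norm_num : -(2:ℝ)/5 ≤ 0)
    linarith
  · have hla : μ ^ (-(2:ℝ)/5) / 2 * μ ^ ((3:ℝ)/5) = μ ^ ((1:ℝ)/5) / 2 := by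
      rw [div_mul_eq_mul_div, ← Real.rpow_add hμ0]
      norm_num
    have h2 : (μ ^ (-(2:ℝ)/5)) ^ 2 = μ ^ (-(4:ℝ)/5) := by
      rw [← Real.rpow_natCast (μ ^ (-(2:ℝ)/5)) 2, ← Real.rpow_mul hμ0.le]
      norm_num
    have h3 : μ * μ ^ (-(4:ℝ)/5) = μ ^ ((1:ℝ)/5) := by
      nth_rewrite 1 [← Real.rpow_one μ]
      rw [← Real.rpow_add hμ0]
      norm_num
    have hml : μ * (μ ^ (-(2:ℝ)/5) / 2) ^ 2 = μ ^ ((1:ℝ)/5) / 4 :=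
      calc μ * (μ ^ (-(2:ℝ)/5) / 2) ^ 2 = μ * (μ ^ (-(2:ℝ)/5)) ^ 2 / 4 := by ring
        _ = μ ^ ((1:ℝ)/5) / 4 := by rw [h2, h3]
    rw [hml, hla]
    ring_nf
    linarith

lemma binomTail_nonneg (k n : ℕ) {t : ℝ} (h0 : 0 ≤ t) (h1 : t ≤ 1) : 0 ≤ binomTail k n t := by
  unfold binomTail
  refine Finset.sum_nonneg fun j _ => ?_
  have hp1 : t ^ k ≤ 1 := pow_le_one₀ h0 h1
  have hp0 : (0:ℝ) ≤ t ^ k := pow_nonneg h0 k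
  split_ifs
  · have h2 : (0:ℝ) ≤ 1 - t ^ k := by linarith
    positivity
  · exact le_refl 0

/-- `Σ_n ∫_{t_c(k,n)}^1 n^k t^{k(k−1)/2}
P(|B_{n,t} − (n−k)t^k| ≥ ((n−k)t^k)^{3/5}) dt < ∞`, the sum being over those `n` with
`t_c(k,n) ∈ (0,1)`. -/
theorem summable_binomial_tail_integral (k : ℕ) (hk : 1 ≤ k) (c : ℝ) :
    Summable (fun n : ℕ =>
      if tc k c n ∈ Set.Ioo (0 : ℝ) 1 then
        ∫ t in (tc k c n)..1, (n : ℝ) ^ k * t ^ (k * (k - 1) / 2) * binomTail k n t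
      else 0) := by
  set β : ℝ := 1 / ((k:ℝ) + 1) with hβdef
  set ε : ℝ := β / 5 with hεdef
  have hβ : 0 < β := by positivity
  have hε : 0 < ε := by positivity
  have hlog : Tendsto (fun n : ℕ => Real.log n) atTop atTop :=
    Real.tendsto_log_atTop.comp tendsto_natCast_atTop_atTop
  have hNR : Tendsto (fun n : ℕ => (n : ℝ)) atTop atTop := tendsto_natCast_atTop_atTop
  have hrp : Tendsto (fun n : ℕ => (n : ℝ) ^ β) atTop atTop :=
    (tendsto_rpow_atTop hβ).comp tendsto_natCast_atTop_atTop
  have hE5real : ∀ᶠ x : ℝ in atTop, Real.log 2 + ((k:ℝ) + 2) * Real.log x ≤ x ^ ε / 8 := by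
    have hk2 : (0:ℝ) < (k:ℝ) + 2 := by positivity
    have h1 := (isLittleO_log_rpow_atTop hε).bound
      (c := 1 / (16 * ((k:ℝ) + 2))) (by positivity)
    have h2 := (tendsto_rpow_atTop hε).eventually_ge_atTop (16 * Real.log 2)
    filter_upwards [h1, h2, eventually_ge_atTop (1:ℝ)] with x hx1 hx2 hx3
    have hx0 : (0:ℝ) ≤ x := by linarith
    rw [Real.norm_eq_abs, Real.norm_eq_abs, abs_of_nonneg (Real.log_nonneg hx3),
      abs_of_nonneg (Real.rpow_nonneg hx0 _)] at hx1
    have h3 : ((k:ℝ) + 2) * Real.log x ≤ ((k:ℝ) + 2) * (1 / (16 * ((k:ℝ) + 2)) * x ^ ε) :=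
      mul_le_mul_of_nonneg_left hx1 hk2.le
    have h4 : ((k:ℝ) + 2) * (1 / (16 * ((k:ℝ) + 2)) * x ^ ε) = x ^ ε / 16 := by
      field_simp
    rw [h4] at h3
    linarith
  have hE5 := hNR.eventually hE5real
  have hE1 := hlog.eventually_ge_atTop (1:ℝ)
  have hE2 := hlog.eventually_ge_atTop (1 - c)
  have hE3 := hNR.eventually_ge_atTop ((2:ℝ) * k)
  have hE4 := hrp.eventually_ge_atTop (2:ℝ)
  have hE6 := hNR.eventually_ge_atTop (1:ℝ)
  apply Summable.of_norm_bounded_eventually_nat (g := fun n => (n:ℝ) ^ (-2:ℝ))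
    (Real.summable_nat_rpow.2 (by norm_num))
  filter_upwards [hE1, hE2, hE3, hE4, hE5, hE6] with n h1 h2 h3 h4 h5 h6
  have hn0 : (0:ℝ) < (n:ℝ) := by linarith
  by_cases hmem : tc k c n ∈ Set.Ioo (0:ℝ) 1
  · simp only [if_pos hmem]
    obtain ⟨htc0, htc1⟩ := hmem
    have hθ1 : 1 ≤ ((k:ℝ)/2 + 1) * Real.log n + ((k:ℝ)/2) * Real.log (Real.log n) + c := by
      have hll : 0 ≤ Real.log (Real.log n) := Real.log_nonneg h1
      have hk0 : (0:ℝ) ≤ (k:ℝ)/2 := by positivity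
      nlinarith [mul_nonneg hk0 (by linarith : (0:ℝ) ≤ Real.log n), mul_nonneg hk0 hll]
    have htcform : tc k c n
        = ((((k:ℝ)/2 + 1) * Real.log n + ((k:ℝ)/2) * Real.log (Real.log n) + c) / n) ^ β :=
      rfl
    have hkR : (0:ℝ) ≤ (k:ℝ) := Nat.cast_nonneg k
    have hkn : k ≤ n := by
      have hx : (k:ℝ) ≤ (n:ℝ) := by linarith
      exact_mod_cast hx
    have hcast : ((n - k : ℕ) : ℝ) = (n:ℝ) - (k:ℝ) := by
      rw [Nat.cast_sub hkn]
    have hinv0 : (0:ℝ) ≤ (n:ℝ)⁻¹ := by positivity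
    have htck : (n:ℝ) ^ (-(β * (k:ℝ))) ≤ (tc k c n) ^ k := by
      have hbase : (n:ℝ)⁻¹
          ≤ (((k:ℝ)/2 + 1) * Real.log n + ((k:ℝ)/2) * Real.log (Real.log n) + c) / n := by
        rw [inv_eq_one_div]
        exact (div_le_div_iff_of_pos_right hn0).2 hθ1
      have htc_ge : ((n:ℝ)⁻¹) ^ β ≤ tc k c n := by
        rw [htcform]
        exact Real.rpow_le_rpow hinv0 hbase hβ.le
      have hpow : (((n:ℝ)⁻¹) ^ β) ^ k = (n:ℝ) ^ (-(β * (k:ℝ))) := by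
        rw [← Real.rpow_natCast (((n:ℝ)⁻¹) ^ β) k, ← Real.rpow_mul hinv0,
          Real.inv_rpow hn0.le, ← Real.rpow_neg hn0.le]
      rw [← hpow]
      exact pow_le_pow_left₀ (Real.rpow_nonneg hinv0 β) htc_ge k
    have hmain : (n:ℝ) ^ β / 2 ≤ ((n:ℝ) - k) * (tc k c n) ^ k := by
      have hnk : (n:ℝ)/2 ≤ (n:ℝ) - k := by linarith
      have hprod : (n:ℝ)/2 * (n:ℝ) ^ (-(β * (k:ℝ))) ≤ ((n:ℝ) - k) * (tc k c n) ^ k :=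
        mul_le_mul hnk htck (Real.rpow_nonneg hn0.le _) (by linarith)
      have hid : (n:ℝ)/2 * (n:ℝ) ^ (-(β * (k:ℝ))) = (n:ℝ) ^ β / 2 := by
        rw [div_mul_eq_mul_div]
        congr 1
        nth_rewrite 1 [← Real.rpow_one (n:ℝ)]
        rw [← Real.rpow_add hn0]
        congr 1
        rw [hβdef]
        have hkne : (k:ℝ) + 1 ≠ 0 := by positivity
        field_simp
        ring
      rw [hid] at hprod
      exact hprod
    have hμ1' : 1 ≤ ((n:ℝ) - k) * (tc k c n) ^ k := le_trans (by linarith) hmain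
    -- pointwise bound on the integrand
    have hCpt : ∀ t ∈ Set.uIoc (tc k c n) (1:ℝ),
        ‖(n:ℝ)^k * t ^ (k*(k-1)/2) * binomTail k n t‖
          ≤ (n:ℝ)^k * (2 * Real.exp (-(n:ℝ) ^ ε / 8)) := by
      intro t ht
      rw [Set.uIoc_of_le htc1.le] at ht
      obtain ⟨htl, htu⟩ := ht
      have ht0 : 0 < t := lt_trans htc0 htl
      have hp0 : (0:ℝ) ≤ t ^ k := by positivity
      have hp1 : t ^ k ≤ 1 := pow_le_one₀ ht0.le htu
      have hμt : ((n:ℝ) - k) * (tc k c n) ^ k ≤ ((n - k : ℕ):ℝ) * t ^ k := by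
        rw [hcast]
        exact mul_le_mul_of_nonneg_left (pow_le_pow_left₀ htc0.le htl.le k) (by linarith)
      have hμt1 : 1 ≤ ((n - k:ℕ):ℝ) * t ^ k := le_trans hμ1' hμt
      have hbt : binomTail k n t
          ≤ 2 * Real.exp (-(((n-k:ℕ):ℝ) * t ^ k) ^ ((1:ℝ)/5) / 4) := by
        unfold binomTail
        exact binom_tail_le (n - k) (t ^ k) hp0 hp1 hμt1
      have hmono : 2 * Real.exp (-(((n-k:ℕ):ℝ) * t ^ k) ^ ((1:ℝ)/5) / 4)
          ≤ 2 * Real.exp (-(n:ℝ) ^ ε / 8) := by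
        have e1 : (n:ℝ) ^ β / 2 ≤ ((n-k:ℕ):ℝ) * t ^ k := le_trans hmain hμt
        have e2 : ((n:ℝ) ^ β / 2) ^ ((1:ℝ)/5) ≤ (((n-k:ℕ):ℝ) * t ^ k) ^ ((1:ℝ)/5) :=
          Real.rpow_le_rpow (by positivity) e1 (by norm_num)
        have e3 : (n:ℝ) ^ ε / 2 ≤ ((n:ℝ) ^ β / 2) ^ ((1:ℝ)/5) := by
          rw [Real.div_rpow (Real.rpow_nonneg hn0.le β) (by norm_num : (0:ℝ) ≤ 2),
            ← Real.rpow_mul hn0.le]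
          have hεeq : β * ((1:ℝ)/5) = ε := by rw [hεdef]; ring
          rw [hεeq]
          have h25 : (2:ℝ) ^ ((1:ℝ)/5) ≤ 2 := by
            nth_rewrite 2 [← Real.rpow_one (2:ℝ)]
            exact Real.rpow_le_rpow_of_exponent_le (by norm_num) (by norm_num)
          have h250 : (0:ℝ) < (2:ℝ) ^ ((1:ℝ)/5) := Real.rpow_pos_of_pos (by norm_num) _
          exact div_le_div_of_nonneg_left (Real.rpow_nonneg hn0.le ε) h250 h25
        have e4 : -(((n-k:ℕ):ℝ) * t ^ k) ^ ((1:ℝ)/5) / 4 ≤ -(n:ℝ) ^ ε / 8 := by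
          have := le_trans e3 e2
          linarith
        exact mul_le_mul_of_nonneg_left (Real.exp_le_exp.2 e4) (by norm_num)
      have hbt0 : 0 ≤ binomTail k n t := binomTail_nonneg k n ht0.le htu
      have htE : t ^ (k*(k-1)/2) ≤ 1 := pow_le_one₀ ht0.le htu
      have hnk0 : (0:ℝ) ≤ (n:ℝ)^k := by positivity
      have habs0 : 0 ≤ (n:ℝ)^k * t ^ (k*(k-1)/2) * binomTail k n t := by positivity
      rw [Real.norm_eq_abs, abs_of_nonneg habs0]
      calc (n:ℝ)^k * t ^ (k*(k-1)/2) * binomTail k n t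
          ≤ (n:ℝ)^k * t ^ (k*(k-1)/2) * (2 * Real.exp (-(n:ℝ) ^ ε / 8)) :=
            mul_le_mul_of_nonneg_left (le_trans hbt hmono) (by positivity)
        _ ≤ (n:ℝ)^k * 1 * (2 * Real.exp (-(n:ℝ) ^ ε / 8)) :=
            mul_le_mul_of_nonneg_right (mul_le_mul_of_nonneg_left htE hnk0) (by positivity)
        _ = (n:ℝ)^k * (2 * Real.exp (-(n:ℝ) ^ ε / 8)) := by ring
    have hInt := intervalIntegral.norm_integral_le_of_norm_le_const hCpt
    have habs1 : |1 - tc k c n| ≤ 1 := by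
      rw [abs_of_nonneg (by linarith)]
      linarith
    have hC0 : 0 ≤ (n:ℝ)^k * (2 * Real.exp (-(n:ℝ) ^ ε / 8)) := by positivity
    -- final comparison with n^(-2)
    have eA : (2:ℝ) * (n:ℝ) ^ ((k:ℝ)+2) ≤ Real.exp ((n:ℝ) ^ ε / 8) := by
      have h := Real.exp_le_exp.2 h5
      rw [Real.exp_add, Real.exp_log (by norm_num : (0:ℝ) < 2),
        mul_comm ((k:ℝ)+2) (Real.log n), ← Real.rpow_def_of_pos hn0] at h
      exact h
    have eB : (n:ℝ)^k * (2 * Real.exp (-(n:ℝ) ^ ε / 8)) ≤ (n:ℝ) ^ (-2:ℝ) := by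
      have hexp : Real.exp (-(n:ℝ) ^ ε / 8) = (Real.exp ((n:ℝ) ^ ε / 8))⁻¹ := by
        rw [neg_div, Real.exp_neg]
      have h7 : (n:ℝ) ^ ((k:ℝ)) = (n:ℝ) ^ ((k:ℝ)+2) * (n:ℝ) ^ (-2:ℝ) := by
        rw [← Real.rpow_add hn0]
        norm_num
      have hE : (0:ℝ) < Real.exp ((n:ℝ) ^ ε / 8) := Real.exp_pos _
      rw [hexp, ← Real.rpow_natCast (n:ℝ) k]
      calc (n:ℝ) ^ ((k:ℝ)) * (2 * (Real.exp ((n:ℝ) ^ ε / 8))⁻¹)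
          = (2 * (n:ℝ) ^ ((k:ℝ)+2) * (Real.exp ((n:ℝ) ^ ε / 8))⁻¹) * (n:ℝ) ^ (-2:ℝ) := by
            rw [h7]; ring
        _ ≤ 1 * (n:ℝ) ^ (-2:ℝ) := by
            apply mul_le_mul_of_nonneg_right _ (Real.rpow_nonneg hn0.le _)
            rw [← div_eq_mul_inv, div_le_one hE]
            exact eA
        _ = (n:ℝ) ^ (-2:ℝ) := one_mul _
    calc ‖∫ t in (tc k c n)..1, (n:ℝ)^k * t ^ (k*(k-1)/2) * binomTail k n t‖
        ≤ (n:ℝ)^k * (2 * Real.exp (-(n:ℝ) ^ ε / 8)) * |1 - tc k c n| := hInt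
      _ ≤ (n:ℝ)^k * (2 * Real.exp (-(n:ℝ) ^ ε / 8)) * 1 :=
          mul_le_mul_of_nonneg_left habs1 hC0
      _ = (n:ℝ)^k * (2 * Real.exp (-(n:ℝ) ^ ε / 8)) := mul_one _
      _ ≤ (n:ℝ) ^ (-2:ℝ) := eB
  · simp only [if_neg hmem, norm_zero]
    positivity
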